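/- arXiv:2010.08194 — 2 statements merged into one kernel-verified Lean document; each statement's English description precedes it below -/
import Mathlib

section
/- For any integers N ≥ 2, k ≥ 0, ℓ ≥ 0 with k + ℓ ≤ N - 1, and any real number ξ, the sum over n from 0 to N-1 of sin(ℓ·(ξ - 2πn/N))·cos(ξ - 2πn/N)^k equals 0. -/
open Real Finset

lemma inner_sum' (N : ℕ) (hN : 2 ≤ N) (m : ℤ) (hm : m ≠ 0) (hm' : m.natAbs < N) (ξ : ℝ) :
    ∑ n ∈ Finset.range N,
      Complex.exp ((m : ℂ) * ((ξ : ℂ) - 2 * π * n / N) * Complex.I) = 0 := by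
  have hN0 : (N:ℝ) ≠ 0 := by positivity
  have hNC : (N:ℂ) ≠ 0 := by exact_mod_cast hN0
  set u : ℂ := Complex.exp ((-(2 * (π:ℂ) * m / N)) * Complex.I) with hu
  have hterm : ∀ n ∈ Finset.range N, Complex.exp ((m:ℂ) * ((ξ:ℂ) - 2 * π * n / N) * Complex.I)
      = Complex.exp ((m:ℂ) * ξ * Complex.I) * u ^ n := by
    intro n _
    rw [hu, ← Complex.exp_nat_mul, ← Complex.exp_add]
    congr 1
    field_simp
    ring
  rw [Finset.sum_congr rfl hterm, ← Finset.mul_sum]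
  have hu1 : u ≠ 1 := by
    intro h
    rw [Complex.exp_eq_one_iff] at h
    obtain ⟨j, hj⟩ := h
    have hI : (Complex.I : ℂ) ≠ 0 := Complex.I_ne_zero
    have hpi : (π:ℂ) ≠ 0 := by exact_mod_cast Real.pi_ne_zero
    have h2pi : (2*(π:ℂ)*Complex.I) ≠ 0 := by
      simp [Real.pi_ne_zero, Complex.I_ne_zero]
    have h3 : ((-m : ℂ)) * (2*(π:ℂ)*Complex.I) = ((j:ℂ)*N) * (2*(π:ℂ)*Complex.I) := by
      field_simp at hj
      linear_combination (2*(π:ℂ)*Complex.I) * hj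
    have : (-(m:ℂ)) = j * N := mul_right_cancel₀ h2pi h3
    have hz : -m = j * N := by exact_mod_cast this
    rcases eq_or_ne j 0 with rfl | hj0
    · simp at hz; exact hm (by linarith [hz])
    · have hna : m.natAbs = j.natAbs * N := by
        have := congrArg Int.natAbs hz
        simpa [Int.natAbs_mul] using this
      have hj1 : 1 ≤ j.natAbs := Nat.one_le_iff_ne_zero.mpr (by simpa using hj0)
      have hge : N ≤ m.natAbs := by
        rw [hna]; exact Nat.le_mul_of_pos_left N (by omega)
      omega
  have huN : u ^ N = 1 := by
    rw [← Complex.exp_nat_mul]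
    have : (N:ℂ) * ((-(2 * (π:ℂ) * m / N)) * Complex.I) = (-m : ℤ) * (2 * π * Complex.I) := by
      push_cast
      field_simp
    rw [this, Complex.exp_int_mul_two_pi_mul_I]
  rw [geom_sum_eq hu1, huN]
  simp

lemma per_theta (k l : ℕ) (θ : ℝ) :
    Real.sin (l * θ) * Real.cos θ ^ k =
    (∑ j ∈ Finset.range (k+1), ((k.choose j : ℂ) / 2^k) *
      Complex.exp ((((l:ℤ) - k + 2*j : ℤ) : ℂ) * θ * Complex.I)).im := by
  have he : Complex.exp ((θ:ℂ) * Complex.I) ≠ 0 := Complex.exp_ne_zero _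
  set e := Complex.exp ((θ:ℂ) * Complex.I) with hedef
  have key : ∀ j ∈ Finset.range (k+1),
      ((k.choose j : ℂ) / 2^k) * Complex.exp ((((l:ℤ) - k + 2*j : ℤ) : ℂ) * θ * Complex.I)
      = ((k.choose j : ℂ) / 2^k) * (e ^ (l + 2*j) / e ^ k) := by
    intro j _
    congr 1
    rw [show ((((l:ℤ) - k + 2*j : ℤ) : ℂ) * θ * Complex.I)
        = (((l + 2*j : ℕ) : ℂ) * ((θ:ℂ) * Complex.I)) - ((k:ℕ) : ℂ) * ((θ:ℂ)*Complex.I) by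
        push_cast; ring,
      Complex.exp_sub, Complex.exp_nat_mul, Complex.exp_nat_mul]
  rw [Finset.sum_congr rfl key]
  have hsum : ∑ j ∈ Finset.range (k+1), ((k.choose j : ℂ) / 2^k) * (e ^ (l + 2*j) / e ^ k)
      = e ^ l * ((e + e⁻¹)/2) ^ k := by
    have hap : (e^2 + 1)^k = ∑ j ∈ Finset.range (k+1), e^(2*j) * (k.choose j : ℂ) := by
      simpa [pow_mul] using add_pow (e^2) 1 k
    have h1 : e ^ l * ((e + e⁻¹)/2)^k = e^l * (e^2+1)^k / (2^k * e^k) := by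
      rw [div_pow]
      field_simp
      ring_nf
      rw [← mul_pow, mul_add, ← mul_assoc, mul_comm e (e^2), mul_assoc, mul_inv_cancel₀ he]
      ring
    rw [h1, hap, Finset.mul_sum]
    rw [Finset.sum_div]
    refine Finset.sum_congr rfl fun j _ => ?_
    rw [pow_add]
    field_simp
  rw [hsum]
  have hcos : ((Real.cos θ : ℂ)) = (e + e⁻¹)/2 := by
    rw [Complex.ofReal_cos, Complex.cos, hedef, ← Complex.exp_neg]
    ring_nf
  have hel : e ^ l = Complex.exp (((l*θ : ℝ) : ℂ) * Complex.I) := by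
    rw [hedef, ← Complex.exp_nat_mul]
    push_cast
    ring_nf
  rw [← hcos, hel]
  have hfin : (Complex.exp (((l*θ : ℝ):ℂ) * Complex.I) * ((Real.cos θ : ℂ))^k).im
      = Real.sin (l*θ) * Real.cos θ ^ k := by
    rw [← Complex.ofReal_pow, Complex.mul_im, Complex.ofReal_im, Complex.ofReal_re,
      Complex.exp_ofReal_mul_I_im]
    ring
  rw [hfin]

theorem trig_sum_vanishes (N k l : ℕ) (hN : 2 ≤ N) (hkl : k + l ≤ N - 1) (ξ : ℝ) :
    ∑ n ∈ Finset.range N,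
      Real.sin (l * (ξ - 2 * π * n / N)) * Real.cos (ξ - 2 * π * n / N) ^ k = 0 := by
  have hrw : ∀ n ∈ Finset.range N,
      Real.sin (l * (ξ - 2 * π * n / N)) * Real.cos (ξ - 2 * π * n / N) ^ k
      = (∑ j ∈ Finset.range (k+1), ((k.choose j : ℂ) / 2^k) *
          Complex.exp ((((l:ℤ) - k + 2*j : ℤ) : ℂ) * ((ξ:ℂ) - 2*π*n/N) * Complex.I)).im := by
    intro n _
    rw [per_theta k l (ξ - 2*π*n/N)]
    congr 1
    refine Finset.sum_congr rfl fun j _ => ?_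
    congr 2
    push_cast
    ring
  rw [Finset.sum_congr rfl hrw, ← Complex.im_sum, Finset.sum_comm, Complex.im_sum]
  refine Finset.sum_eq_zero fun j hj => ?_
  simp only [Finset.mem_range] at hj
  by_cases hm0 : ((l:ℤ) - k + 2*j : ℤ) = 0
  · rw [hm0]
    simp [Complex.div_im]
    right; right
    rw [show ((2:ℂ)^k) = ((2^k : ℝ) : ℂ) by push_cast; ring]
    exact Complex.ofReal_im _
  · have hbd : ((l:ℤ) - k + 2*j : ℤ).natAbs < N := by omega
    rw [← Finset.mul_sum, inner_sum' N hN _ hm0 hbd ξ, mul_zero, Complex.zero_im]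
end

section
/- Let N ≥ 2 and 0 < s < 1 and let c_s > 0. For fixed 1/2 < r, r' < 2 with r ≠ r', the function ξ ↦ κ(ξ) := Σ_{n=0}^{N-1} c_s·(r² + r'² - 2rr'·cos(ξ - 2πn/N))^{-(1-s)} is strictly decreasing on (0, π/N) and strictly increasing on (-π/N, 0). -/
open Polynomial Finset Real

lemma prod_root_sub (M : ℕ) (hM : 0 < M) (ζ : ℂ) (h : IsPrimitiveRoot ζ M) (z : ℂ) :
    ∏ n ∈ range M, (z - ζ ^ n) = z ^ M - 1 := by
  classical
  have himg : (range M).image (ζ ^ ·) = nthRootsFinset M (1 : ℂ) := by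
    apply Finset.eq_of_subset_of_card_le
    · intro x hx
      simp only [mem_image, mem_range] at hx
      obtain ⟨n, hn, rfl⟩ := hx
      exact (Polynomial.mem_nthRootsFinset hM 1).2 (by
        rw [← pow_mul, mul_comm, pow_mul, h.pow_eq_one, one_pow])
    · rw [h.card_nthRootsFinset, Finset.card_image_of_injOn]
      · simp
      · intro i hi j hj hij
        exact h.pow_inj (mem_range.1 hi) (mem_range.1 hj) hij
  have := congrArg (Polynomial.eval z) (X_pow_sub_one_eq_prod hM h)
  simp only [eval_sub, eval_pow, eval_X, eval_one, eval_prod, eval_C] at this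
  rw [this, ← himg, Finset.prod_image]
  intro i hi j hj hij
  exact h.pow_inj (mem_range.1 hi) (mem_range.1 hj) hij

lemma prod_lin (M : ℕ) (hM : 0 < M) (ζ : ℂ) (h : IsPrimitiveRoot ζ M) (a w : ℂ) :
    ∏ n ∈ range M, (a - w * ζ ^ n) = a ^ M - w ^ M := by
  rcases eq_or_ne w 0 with rfl | hw
  · simp [zero_pow hM.ne', Finset.prod_const, card_range]
  · have : ∀ n, a - w * ζ ^ n = w * (a / w - ζ ^ n) := by
      intro n; field_simp
    simp only [this]
    rw [Finset.prod_mul_distrib, Finset.prod_const, card_range, prod_root_sub M hM ζ h]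
    have hwM : w ^ M ≠ 0 := pow_ne_zero _ hw
    rw [div_pow, mul_sub, mul_div_assoc', mul_comm (w ^ M) (a ^ M), mul_div_assoc, div_self hwM]
    ring

lemma prod_formula (N : ℕ) (hN : 0 < N) (a b ξ : ℝ) :
    ∏ n ∈ range N, (a ^ 2 + b ^ 2 - 2 * a * b * Real.cos (ξ - 2 * π * n / N))
      = a ^ (2 * N) + b ^ (2 * N) - 2 * (a * b) ^ N * Real.cos (N * ξ) := by
  have hNC : (N : ℂ) ≠ 0 := Nat.cast_ne_zero.2 hN.ne'
  set ζ : ℂ := Complex.exp (2 * ↑π * Complex.I / ↑N) with hζdef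
  have hζ : IsPrimitiveRoot ζ N := Complex.isPrimitiveRoot_exp N hN.ne'
  have hζinv : IsPrimitiveRoot ζ⁻¹ N := hζ.inv
  have hζn : ∀ n : ℕ, ζ ^ n = Complex.exp (2 * ↑π * Complex.I * n / N) := by
    intro n
    rw [hζdef, ← Complex.exp_nat_mul]
    ring_nf
  have hζinvn : ∀ n : ℕ, ζ⁻¹ ^ n = Complex.exp (-(2 * ↑π * Complex.I * n / N)) := by
    intro n
    rw [hζdef, ← Complex.exp_neg, ← Complex.exp_nat_mul]
    congr 1; ring
  -- key scalar identity
  have key : ∀ φ : ℝ, ((a ^ 2 + b ^ 2 - 2 * a * b * Real.cos φ : ℝ) : ℂ)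
      = ((a : ℂ) - b * Complex.exp (φ * Complex.I)) * ((a : ℂ) - b * Complex.exp (-(φ * Complex.I))) := by
    intro φ
    have h1 : Complex.exp (↑φ * Complex.I) * Complex.exp (-(↑φ * Complex.I)) = 1 := by
      rw [← Complex.exp_add]; simp
    have h2 : Complex.exp (↑φ * Complex.I) + Complex.exp (-(↑φ * Complex.I)) = 2 * Complex.cos φ := by
      rw [Complex.two_cos]; ring_nf
    push_cast [Complex.ofReal_cos]
    have : ((a : ℂ) - b * Complex.exp (φ * Complex.I)) * ((a : ℂ) - b * Complex.exp (-(φ * Complex.I)))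
        = a^2 + b^2 * (Complex.exp (↑φ * Complex.I) * Complex.exp (-(↑φ * Complex.I)))
          - a * b * (Complex.exp (↑φ * Complex.I) + Complex.exp (-(↑φ * Complex.I))) := by ring
    rw [this, h1, h2]; ring
  apply Complex.ofReal_injective
  push_cast
  have expand : ∀ n ∈ range N,
      ((a : ℂ) ^ 2 + (b : ℂ) ^ 2 - 2 * a * b * Complex.cos ((ξ : ℂ) - 2 * π * n / N))
      = ((a : ℂ) - (b * Complex.exp (ξ * Complex.I)) * ζ⁻¹ ^ n)
        * ((a : ℂ) - (b * Complex.exp (-(ξ * Complex.I))) * ζ ^ n) := by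
    intro n hn
    have := key (ξ - 2 * π * n / N)
    push_cast [Complex.ofReal_cos] at this
    rw [this, hζn, hζinvn]
    have ha : ((ξ:ℂ) - 2 * ↑π * ↑n / ↑N) * Complex.I
        = ↑ξ * Complex.I + (-(2 * ↑π * Complex.I * ↑n / ↑N)) := by push_cast; ring
    have hb : -((ξ:ℂ) * Complex.I + -(2 * ↑π * Complex.I * ↑n / ↑N))
        = -(↑ξ * Complex.I) + 2 * ↑π * Complex.I * ↑n / ↑N := by ring
    rw [ha, hb, Complex.exp_add, Complex.exp_add]
    ring
  rw [Finset.prod_congr rfl expand, Finset.prod_mul_distrib,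
    prod_lin N hN ζ⁻¹ hζinv, prod_lin N hN ζ hζ]
  have e1 : ((b : ℂ) * Complex.exp (ξ * Complex.I)) ^ N = b ^ N * Complex.exp ((N * ξ : ℝ) * Complex.I) := by
    rw [mul_pow, ← Complex.exp_nat_mul]
    congr 1
    push_cast; ring
  have e2 : ((b : ℂ) * Complex.exp (-(ξ * Complex.I))) ^ N = b ^ N * Complex.exp (-((N * ξ : ℝ) * Complex.I)) := by
    rw [mul_pow, ← Complex.exp_nat_mul]
    congr 1
    push_cast; ring
  rw [e1, e2]
  have h1 : Complex.exp ((N * ξ : ℝ) * Complex.I) * Complex.exp (-((N * ξ : ℝ) * Complex.I)) = 1 := by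
    rw [← Complex.exp_add]; simp
  have h2 : Complex.exp ((N * ξ : ℝ) * Complex.I) + Complex.exp (-((N * ξ : ℝ) * Complex.I))
      = 2 * Complex.cos ((N * ξ : ℝ) : ℂ) := by
    rw [Complex.two_cos]; ring_nf
  have expand2 : ((a:ℂ) ^ N - b ^ N * Complex.exp ((N * ξ : ℝ) * Complex.I))
      * ((a:ℂ) ^ N - b ^ N * Complex.exp (-((N * ξ : ℝ) * Complex.I)))
      = (a:ℂ)^(2*N) + (b:ℂ)^(2*N) * (Complex.exp ((N * ξ : ℝ) * Complex.I) * Complex.exp (-((N * ξ : ℝ) * Complex.I)))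
        - a^N * b^N * (Complex.exp ((N * ξ : ℝ) * Complex.I) + Complex.exp (-((N * ξ : ℝ) * Complex.I))) := by
    ring
  rw [expand2, h1, h2]
  push_cast
  ring

lemma sum_sin_prod (N : ℕ) (hN : 0 < N) (B μ ξ : ℝ) (hB : 0 < B) (hBμ : B ≤ μ) :
    ∑ n ∈ range N, Real.sin (ξ - 2 * π * n / N)
        * ∏ m ∈ (range N).erase n, (μ - B * Real.cos (ξ - 2 * π * m / N))
      = N * (B / 2) ^ (N - 1) * Real.sin (N * ξ) := by
  set x := Real.sqrt (μ + B) with hxdef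
  set y := Real.sqrt (μ - B) with hydef
  have hx2 : x ^ 2 = μ + B := Real.sq_sqrt (by linarith)
  have hy2 : y ^ 2 = μ - B := Real.sq_sqrt (by linarith)
  set a := (x + y) / 2 with hadef
  set b := (x - y) / 2 with hbdef
  have ha2b2 : a ^ 2 + b ^ 2 = μ := by
    rw [hadef, hbdef]; nlinarith [hx2, hy2]
  have hab : 2 * a * b = B := by
    rw [hadef, hbdef]; nlinarith [hx2, hy2]
  have hform : ∀ φ : ℝ, μ - B * Real.cos φ = a ^ 2 + b ^ 2 - 2 * a * b * Real.cos φ := by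
    intro φ; rw [ha2b2, hab]
  -- derivatives of each factor
  have hfac : ∀ θ : ℝ, HasDerivAt (fun t => a ^ 2 + b ^ 2 - 2 * a * b * Real.cos (t - θ))
      (2 * a * b * Real.sin (ξ - θ)) ξ := by
    intro θ
    have h1 : HasDerivAt (fun t : ℝ => t - θ) 1 ξ := (hasDerivAt_id ξ).sub_const _
    have h2 : HasDerivAt (fun t => Real.cos (t - θ)) (-Real.sin (ξ - θ)) ξ := by
      have := (Real.hasDerivAt_cos (ξ - θ)).comp ξ h1
      rw [mul_one] at this
      exact this
    have h3 := (h2.const_mul (2 * a * b)).const_sub (a ^ 2 + b ^ 2)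
    refine h3.congr_deriv ?_
    ring
  have hP : HasDerivAt (fun t => ∏ n ∈ range N, (a ^ 2 + b ^ 2 - 2 * a * b * Real.cos (t - 2 * π * n / N)))
      (∑ n ∈ range N, (∏ m ∈ (range N).erase n,
          (a ^ 2 + b ^ 2 - 2 * a * b * Real.cos (ξ - 2 * π * m / N)))
        • (2 * a * b * Real.sin (ξ - 2 * π * n / N))) ξ :=
    HasDerivAt.fun_finsetProd (fun n _ => hfac (2 * π * n / N))
  have hPR : (fun t => ∏ n ∈ range N, (a ^ 2 + b ^ 2 - 2 * a * b * Real.cos (t - 2 * π * n / N)))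
      = fun t => a ^ (2 * N) + b ^ (2 * N) - 2 * (a * b) ^ N * Real.cos (N * t) := by
    funext t
    exact prod_formula N hN a b t
  rw [hPR] at hP
  have hR : HasDerivAt (fun t => a ^ (2 * N) + b ^ (2 * N) - 2 * (a * b) ^ N * Real.cos (N * t))
      (2 * (a * b) ^ N * Real.sin (N * ξ) * N) ξ := by
    have h4 : HasDerivAt (fun t : ℝ => (N : ℝ) * t) N ξ := by
      simpa using (hasDerivAt_id ξ).const_mul (N : ℝ)
    have h5 : HasDerivAt (fun t => Real.cos ((N : ℝ) * t)) (-Real.sin ((N : ℝ) * ξ) * N) ξ :=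
      (Real.hasDerivAt_cos _).comp ξ h4
    have h6 := (h5.const_mul (2 * (a * b) ^ N)).const_sub (a ^ (2 * N) + b ^ (2 * N))
    refine h6.congr_deriv ?_
    ring
  have heq := hP.unique hR
  -- now massage
  have hBab : a * b = B / 2 := by linarith
  have hpow : (B / 2) ^ N = (B / 2) ^ (N - 1) * (B / 2) := by
    rw [← pow_succ, Nat.sub_add_cancel hN]
  apply mul_left_cancel₀ hB.ne'
  calc B * ∑ n ∈ range N, Real.sin (ξ - 2 * π * n / N)
        * ∏ m ∈ (range N).erase n, (μ - B * Real.cos (ξ - 2 * π * m / N))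
      = ∑ n ∈ range N, (∏ m ∈ (range N).erase n,
          (a ^ 2 + b ^ 2 - 2 * a * b * Real.cos (ξ - 2 * π * m / N)))
        • (2 * a * b * Real.sin (ξ - 2 * π * n / N)) := by
        rw [Finset.mul_sum]
        refine Finset.sum_congr rfl fun n _ => ?_
        simp only [smul_eq_mul, hform, hab]
        ring
    _ = 2 * (a * b) ^ N * Real.sin (N * ξ) * N := heq
    _ = B * (N * (B / 2) ^ (N - 1) * Real.sin (N * ξ)) := by
        rw [hBab, hpow]; ring

lemma sum_sin_inv (N : ℕ) (hN : 0 < N) (B ξ : ℝ) (hB : 0 < B) {μ : ℝ} (hμ : B < μ) :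
    ∑ n ∈ range N, Real.sin (ξ - 2 * π * n / N) * (μ - B * Real.cos (ξ - 2 * π * n / N))⁻¹
      = N * (B / 2) ^ (N - 1) * Real.sin (N * ξ)
        * (∏ n ∈ range N, (μ - B * Real.cos (ξ - 2 * π * n / N)))⁻¹ := by
  have hxpos : ∀ n : ℕ, 0 < μ - B * Real.cos (ξ - 2 * π * n / N) := by
    intro n
    nlinarith [Real.cos_le_one (ξ - 2 * π * n / N), Real.neg_one_le_cos (ξ - 2 * π * n / N)]
  have hprodpos : 0 < ∏ n ∈ range N, (μ - B * Real.cos (ξ - 2 * π * n / N)) :=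
    Finset.prod_pos fun n _ => hxpos n
  rw [← sum_sin_prod N hN B μ ξ hB hμ.le, Finset.sum_mul]
  refine Finset.sum_congr rfl fun n hn => ?_
  have hsplit : (∏ m ∈ range N, (μ - B * Real.cos (ξ - 2 * π * m / N)))
      = (μ - B * Real.cos (ξ - 2 * π * n / N))
        * ∏ m ∈ (range N).erase n, (μ - B * Real.cos (ξ - 2 * π * m / N)) :=
    (Finset.mul_prod_erase (range N) _ hn).symm
  rw [hsplit, mul_inv]
  have h1 : (μ - B * Real.cos (ξ - 2 * π * n / N)) ≠ 0 := (hxpos n).ne'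
  have he : (∏ m ∈ (range N).erase n, (μ - B * Real.cos (ξ - 2 * π * m / N))) ≠ 0 :=
    (Finset.prod_pos fun m hm => hxpos m).ne'
  rw [show Real.sin (ξ - 2 * π * n / N)
      * (∏ m ∈ (range N).erase n, (μ - B * Real.cos (ξ - 2 * π * m / N)))
      * ((μ - B * Real.cos (ξ - 2 * π * n / N))⁻¹
        * (∏ m ∈ (range N).erase n, (μ - B * Real.cos (ξ - 2 * π * m / N)))⁻¹)
      = Real.sin (ξ - 2 * π * n / N) * (μ - B * Real.cos (ξ - 2 * π * n / N))⁻¹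
        * ((∏ m ∈ (range N).erase n, (μ - B * Real.cos (ξ - 2 * π * m / N)))
          * (∏ m ∈ (range N).erase n, (μ - B * Real.cos (ξ - 2 * π * m / N)))⁻¹) from by ring,
    mul_inv_cancel₀ he, mul_one]

lemma sum_sin_invsq (N : ℕ) (hN : 0 < N) (B ξ : ℝ) (hB : 0 < B) {μ : ℝ} (hμ : B < μ) :
    ∑ n ∈ range N, Real.sin (ξ - 2 * π * n / N) * ((μ - B * Real.cos (ξ - 2 * π * n / N)) ^ 2)⁻¹
      = N * (B / 2) ^ (N - 1) * Real.sin (N * ξ)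
        * (∑ n ∈ range N, ∏ m ∈ (range N).erase n, (μ - B * Real.cos (ξ - 2 * π * m / N)))
        * ((∏ n ∈ range N, (μ - B * Real.cos (ξ - 2 * π * n / N))) ^ 2)⁻¹ := by
  classical
  set C := (N : ℝ) * (B / 2) ^ (N - 1) * Real.sin (N * ξ) with hCdef
  set c : ℕ → ℝ := fun n => B * Real.cos (ξ - 2 * π * n / N) with hcdef
  have hxpos : ∀ (ν : ℝ), B < ν → ∀ n : ℕ, 0 < ν - c n := by
    intro ν hν n
    have h1 := Real.cos_le_one (ξ - 2 * π * n / N)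
    have h2 := Real.neg_one_le_cos (ξ - 2 * π * n / N)
    simp only [hcdef]
    nlinarith
  -- F and G
  set F : ℝ → ℝ := fun ν => ∑ n ∈ range N, Real.sin (ξ - 2 * π * n / N) * (ν - c n)⁻¹ with hFdef
  set G : ℝ → ℝ := fun ν => C * (∏ n ∈ range N, (ν - c n))⁻¹ with hGdef
  have hFG : ∀ ν ∈ Set.Ioi B, F ν = G ν := by
    intro ν hν
    exact sum_sin_inv N hN B ξ hB hν
  have hF : HasDerivAt F (∑ n ∈ range N,
      Real.sin (ξ - 2 * π * n / N) * (-((μ - c n) ^ 2)⁻¹)) μ := by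
    apply HasDerivAt.fun_sum
    intro n _
    have h1 : HasDerivAt (fun ν : ℝ => ν - c n) 1 μ := (hasDerivAt_id μ).sub_const _
    have h2 := h1.inv (hxpos μ hμ n).ne'
    have h3 := h2.const_mul (Real.sin (ξ - 2 * π * n / N))
    refine h3.congr_deriv ?_
    ring
  have hQ : HasDerivAt (fun ν : ℝ => ∏ n ∈ range N, (ν - c n))
      (∑ n ∈ range N, ∏ m ∈ (range N).erase n, (μ - c m)) μ := by
    have := HasDerivAt.fun_finsetProd (u := range N) (f := fun n ν => ν - c n)
      (f' := fun _ => 1) (x := μ) (fun n _ => (hasDerivAt_id μ).sub_const _)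
    simpa using this
  have hQpos : 0 < ∏ n ∈ range N, (μ - c n) := Finset.prod_pos fun n _ => hxpos μ hμ n
  have hG : HasDerivAt G (C * (-(∑ n ∈ range N, ∏ m ∈ (range N).erase n, (μ - c m))
      / (∏ n ∈ range N, (μ - c n)) ^ 2)) μ :=
    (hQ.inv hQpos.ne').const_mul C
  have hmem : Set.Ioi B ∈ nhds μ := (isOpen_Ioi).mem_nhds hμ
  have hFGev : G =ᶠ[nhds μ] F := by
    filter_upwards [hmem] with ν hν
    exact (hFG ν hν).symm
  have hF' : HasDerivAt F (C * (-(∑ n ∈ range N, ∏ m ∈ (range N).erase n, (μ - c m))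
      / (∏ n ∈ range N, (μ - c n)) ^ 2)) μ := hG.congr_of_eventuallyEq hFGev.symm
  have heq := hF.unique hF'
  have : ∑ n ∈ range N, Real.sin (ξ - 2 * π * n / N) * ((μ - c n) ^ 2)⁻¹
      = C * ((∑ n ∈ range N, ∏ m ∈ (range N).erase n, (μ - c m))
        / (∏ n ∈ range N, (μ - c n)) ^ 2) := by
    have h2 : ∑ n ∈ range N, Real.sin (ξ - 2 * π * n / N) * (-((μ - c n) ^ 2)⁻¹)
        = -∑ n ∈ range N, Real.sin (ξ - 2 * π * n / N) * ((μ - c n) ^ 2)⁻¹ := by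
      rw [← Finset.sum_neg_distrib]
      exact Finset.sum_congr rfl fun n _ => by ring
    rw [h2] at heq
    have h4 : C * (-(∑ n ∈ range N, ∏ m ∈ (range N).erase n, (μ - c m))
        / (∏ n ∈ range N, (μ - c n)) ^ 2)
        = -(C * ((∑ n ∈ range N, ∏ m ∈ (range N).erase n, (μ - c m))
          / (∏ n ∈ range N, (μ - c n)) ^ 2)) := by ring
    rw [h4] at heq
    exact neg_injective heq
  simp only [hcdef] at this
  rw [this]
  ring

open MeasureTheory in
lemma integrable_kernel (p x : ℝ) (hp1 : 1 < p) (hp2 : p < 2) (hx : 0 < x) :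
    IntegrableOn (fun l : ℝ => l ^ (1 - p) * ((x + l) ^ 2)⁻¹) (Set.Ioi 0) := by
  have hmeas : Measurable fun l : ℝ => l ^ (1 - p) * ((x + l) ^ 2)⁻¹ :=
    (measurable_id.pow_const _).mul ((measurable_const.add measurable_id).pow_const 2).inv
  have hsplit : Set.Ioi (0:ℝ) = Set.Ioc 0 1 ∪ Set.Ioi 1 := (Set.Ioc_union_Ioi_eq_Ioi zero_le_one).symm
  rw [hsplit]
  apply IntegrableOn.union
  · -- on Ioc 0 1
    have hint : IntegrableOn (fun l : ℝ => l ^ (1 - p) * (x ^ 2)⁻¹) (Set.Ioc 0 1) := by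
      have h1 : IntervalIntegrable (fun l : ℝ => l ^ (1 - p)) volume 0 1 :=
        intervalIntegral.intervalIntegrable_rpow' (by linarith)
      have h2 : IntegrableOn (fun l : ℝ => l ^ (1 - p)) (Set.Ioc 0 1) :=
        (intervalIntegrable_iff_integrableOn_Ioc_of_le zero_le_one).1 h1
      exact h2.mul_const _
    refine hint.mono' hmeas.aestronglyMeasurable.restrict ?_
    filter_upwards [ae_restrict_mem measurableSet_Ioc] with l hl
    have hl0 : 0 < l := hl.1
    have h3 : (0:ℝ) < x + l := by linarith
    rw [Real.norm_eq_abs, abs_mul, abs_of_nonneg (Real.rpow_nonneg hl0.le _),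
      abs_of_nonneg (by positivity : (0:ℝ) ≤ ((x + l) ^ 2)⁻¹)]
    have h4 : ((x + l) ^ 2)⁻¹ ≤ (x ^ 2)⁻¹ := by
      apply inv_anti₀ (by positivity)
      nlinarith
    exact mul_le_mul_of_nonneg_left h4 (Real.rpow_nonneg hl0.le _)
  · -- on Ioi 1
    have hint : IntegrableOn (fun l : ℝ => l ^ (-1 - p)) (Set.Ioi 1) :=
      integrableOn_Ioi_rpow_of_lt (by linarith) one_pos
    refine hint.mono' hmeas.aestronglyMeasurable.restrict ?_
    filter_upwards [ae_restrict_mem measurableSet_Ioi] with l hl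
    have hl1 : (1:ℝ) < l := hl
    have hl0 : (0:ℝ) < l := by linarith
    rw [Real.norm_eq_abs, abs_mul, abs_of_nonneg (Real.rpow_nonneg hl0.le _),
      abs_of_nonneg (by positivity : (0:ℝ) ≤ ((x + l) ^ 2)⁻¹)]
    have h4 : ((x + l) ^ 2)⁻¹ ≤ (l ^ 2)⁻¹ := by
      apply inv_anti₀ (by positivity)
      nlinarith
    calc l ^ (1 - p) * ((x + l) ^ 2)⁻¹ ≤ l ^ (1 - p) * (l ^ 2)⁻¹ :=
          mul_le_mul_of_nonneg_left h4 (Real.rpow_nonneg hl0.le _)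
      _ = l ^ (-1 - p) := by
          rw [← Real.rpow_natCast l 2, ← Real.rpow_neg hl0.le, ← Real.rpow_add hl0]
          congr 1; ring

open MeasureTheory in
lemma rep_integral (p x : ℝ) (hp1 : 1 < p) (hp2 : p < 2) (hx : 0 < x) :
    ∫ l in Set.Ioi (0:ℝ), l ^ (1 - p) * ((x + l) ^ 2)⁻¹
      = x ^ (-p) * ∫ l in Set.Ioi (0:ℝ), l ^ (1 - p) * ((1 + l) ^ 2)⁻¹ := by
  have hcomp := integral_comp_mul_left_Ioi (fun u : ℝ => u ^ (1 - p) * ((x + u) ^ 2)⁻¹) 0 hx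
  rw [mul_zero] at hcomp
  -- LHS of hcomp : ∫ t in Ioi 0, (x*t)^(1-p) * ((x + x*t)^2)⁻¹ = x⁻¹ • ∫ u in Ioi 0, ...
  have hpt : ∀ t ∈ Set.Ioi (0:ℝ), (x * t) ^ (1 - p) * ((x + x * t) ^ 2)⁻¹
      = x ^ (-1 - p) * (t ^ (1 - p) * ((1 + t) ^ 2)⁻¹) := by
    intro t ht
    have ht0 : 0 < t := ht
    rw [Real.mul_rpow hx.le ht0.le]
    have h1 : (x + x * t) ^ 2 = x ^ 2 * (1 + t) ^ 2 := by ring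
    rw [h1, mul_inv]
    have h2 : x ^ (1 - p) * (x ^ 2)⁻¹ = x ^ (-1 - p) := by
      rw [← Real.rpow_natCast x 2, ← Real.rpow_neg hx.le, ← Real.rpow_add hx]
      congr 1; ring
    calc x ^ (1 - p) * t ^ (1 - p) * ((x ^ 2)⁻¹ * ((1 + t) ^ 2)⁻¹)
        = (x ^ (1 - p) * (x ^ 2)⁻¹) * (t ^ (1 - p) * ((1 + t) ^ 2)⁻¹) := by ring
      _ = x ^ (-1 - p) * (t ^ (1 - p) * ((1 + t) ^ 2)⁻¹) := by rw [h2]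
  rw [setIntegral_congr_fun measurableSet_Ioi hpt, integral_const_mul] at hcomp
  -- hcomp : x^(-1-p) * ∫ base = x⁻¹ • ∫ target
  have : ∫ l in Set.Ioi (0:ℝ), l ^ (1 - p) * ((x + l) ^ 2)⁻¹
      = x * (x ^ (-1 - p) * ∫ l in Set.Ioi (0:ℝ), l ^ (1 - p) * ((1 + l) ^ 2)⁻¹) := by
    rw [hcomp, smul_eq_mul]
    field_simp
  rw [this, ← mul_assoc]
  congr 1
  nth_rewrite 1 [← Real.rpow_one x]
  rw [← Real.rpow_add hx]
  congr 1; ring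

open MeasureTheory in
lemma c_p_pos (p : ℝ) (hp1 : 1 < p) (hp2 : p < 2) :
    0 < ∫ l in Set.Ioi (0:ℝ), l ^ (1 - p) * ((1 + l) ^ 2)⁻¹ := by
  have hnn : 0 ≤ᵐ[volume.restrict (Set.Ioi (0:ℝ))] fun l : ℝ => l ^ (1 - p) * ((1 + l) ^ 2)⁻¹ := by
    filter_upwards [ae_restrict_mem measurableSet_Ioi] with l hl
    have hl0 : (0:ℝ) < l := hl
    positivity
  have hii : IntegrableOn (fun l : ℝ => l ^ (1 - p) * ((1 + l) ^ 2)⁻¹) (Set.Ioi 0) :=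
    integrable_kernel p 1 hp1 hp2 one_pos
  rw [setIntegral_pos_iff_support_of_nonneg_ae hnn hii]
  · have hsub : Set.Ioi (0:ℝ) ⊆ Function.support (fun l : ℝ => l ^ (1 - p) * ((1 + l) ^ 2)⁻¹) ∩ Set.Ioi 0 := by
      intro l hl
      have hl0 : (0:ℝ) < l := hl
      constructor
      · have : 0 < l ^ (1 - p) * ((1 + l) ^ 2)⁻¹ := by
          apply mul_pos (Real.rpow_pos_of_pos hl0 _)
          positivity
        exact this.ne'
      · exact hl
    calc (0:ENNReal) < volume (Set.Ioi (0:ℝ)) := by simp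
      _ ≤ _ := measure_mono hsub

open MeasureTheory in
lemma key_sign (N : ℕ) (hN : 0 < N) (A B p ξ : ℝ) (hB : 0 < B) (hAB : B < A)
    (hp1 : 1 < p) (hp2 : p < 2) (hsin : Real.sin (N * ξ) ≠ 0) :
    ∃ W : ℝ, 0 < W ∧
      ∑ n ∈ range N, Real.sin (ξ - 2 * π * n / N)
          * (A - B * Real.cos (ξ - 2 * π * n / N)) ^ (-p)
        = Real.sin (N * ξ) * W := by
  classical
  have hxpos : ∀ n : ℕ, 0 < A - B * Real.cos (ξ - 2 * π * n / N) := by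
    intro n
    nlinarith [Real.cos_le_one (ξ - 2 * π * n / N), Real.neg_one_le_cos (ξ - 2 * π * n / N)]
  set cp := ∫ l in Set.Ioi (0:ℝ), l ^ (1 - p) * ((1 + l) ^ 2)⁻¹ with hcpdef
  have hcp : 0 < cp := c_p_pos p hp1 hp2
  set K := (N : ℝ) * (B / 2) ^ (N - 1) with hKdef
  have hK : 0 < K := by
    apply mul_pos (by exact_mod_cast hN)
    positivity
  set G0 : ℝ → ℝ := fun l => l ^ (1 - p)
    * (K * (∑ n ∈ range N, ∏ m ∈ (range N).erase n, (A + l - B * Real.cos (ξ - 2 * π * m / N)))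
      * ((∏ n ∈ range N, (A + l - B * Real.cos (ξ - 2 * π * n / N))) ^ 2)⁻¹) with hG0def
  set h : ℝ → ℝ := fun l => ∑ n ∈ range N, Real.sin (ξ - 2 * π * n / N)
    * (l ^ (1 - p) * ((A - B * Real.cos (ξ - 2 * π * n / N) + l) ^ 2)⁻¹) with hhdef
  have hterm_int : ∀ n ∈ range N, Integrable (fun l : ℝ => Real.sin (ξ - 2 * π * n / N)
      * (l ^ (1 - p) * ((A - B * Real.cos (ξ - 2 * π * n / N) + l) ^ 2)⁻¹))
      (volume.restrict (Set.Ioi 0)) := by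
    intro n _
    exact (integrable_kernel p _ hp1 hp2 (hxpos n)).const_mul _
  have hh_int : Integrable h (volume.restrict (Set.Ioi 0)) := by
    rw [hhdef]
    exact integrable_finset_sum _ hterm_int
  -- integral of h = cp * target sum
  have hint_h : ∫ l in Set.Ioi (0:ℝ), h l
      = cp * ∑ n ∈ range N, Real.sin (ξ - 2 * π * n / N)
          * (A - B * Real.cos (ξ - 2 * π * n / N)) ^ (-p) := by
    rw [hhdef, integral_finset_sum _ hterm_int, Finset.mul_sum]
    refine Finset.sum_congr rfl fun n _ => ?_
    rw [integral_const_mul, rep_integral p _ hp1 hp2 (hxpos n), hcpdef]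
    ring
  -- h = sin(Nξ) * G0 on Ioi 0
  have hhG : ∀ l ∈ Set.Ioi (0:ℝ), h l = Real.sin (N * ξ) * G0 l := by
    intro l hl
    have hl0 : (0:ℝ) < l := hl
    have hμ : B < A + l := by linarith
    have hkey := sum_sin_invsq N hN B ξ hB hμ
    have harg : ∀ n : ℕ, A - B * Real.cos (ξ - 2 * π * n / N) + l
        = A + l - B * Real.cos (ξ - 2 * π * n / N) := fun n => by ring
    calc h l = l ^ (1 - p) * ∑ n ∈ range N, Real.sin (ξ - 2 * π * n / N)
          * ((A + l - B * Real.cos (ξ - 2 * π * n / N)) ^ 2)⁻¹ := by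
          rw [hhdef, Finset.mul_sum]
          exact Finset.sum_congr rfl fun n _ => by rw [harg n]; ring
      _ = l ^ (1 - p) * (K * Real.sin (N * ξ)
            * (∑ n ∈ range N, ∏ m ∈ (range N).erase n, (A + l - B * Real.cos (ξ - 2 * π * m / N)))
            * ((∏ n ∈ range N, (A + l - B * Real.cos (ξ - 2 * π * n / N))) ^ 2)⁻¹) := by
          rw [hkey]
      _ = Real.sin (N * ξ) * G0 l := by rw [hG0def]; ring
  have hint_hG : ∫ l in Set.Ioi (0:ℝ), h l = Real.sin (N * ξ) * ∫ l in Set.Ioi (0:ℝ), G0 l := by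
    rw [setIntegral_congr_fun measurableSet_Ioi hhG, integral_const_mul]
  -- G0 integrable
  have hG0_int : Integrable G0 (volume.restrict (Set.Ioi 0)) := by
    have h1 : Integrable (fun l => (Real.sin (N * ξ))⁻¹ * h l) (volume.restrict (Set.Ioi 0)) :=
      hh_int.const_mul _
    apply h1.congr
    filter_upwards [ae_restrict_mem measurableSet_Ioi] with l hl
    rw [hhG l hl]
    field_simp
  -- positivity of ∫ G0
  have hG0pos : ∀ l ∈ Set.Ioi (0:ℝ), 0 < G0 l := by
    intro l hl
    have hl0 : (0:ℝ) < l := hl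
    have hμ : B < A + l := by linarith
    have hfac : ∀ n : ℕ, 0 < A + l - B * Real.cos (ξ - 2 * π * n / N) := by
      intro n
      nlinarith [Real.cos_le_one (ξ - 2 * π * n / N), Real.neg_one_le_cos (ξ - 2 * π * n / N)]
    have hS : 0 < ∑ n ∈ range N, ∏ m ∈ (range N).erase n,
        (A + l - B * Real.cos (ξ - 2 * π * m / N)) := by
      apply Finset.sum_pos (fun n _ => Finset.prod_pos fun m _ => hfac m)
      exact Finset.nonempty_range_iff.2 hN.ne'
    have hQ : 0 < ∏ n ∈ range N, (A + l - B * Real.cos (ξ - 2 * π * n / N)) :=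
      Finset.prod_pos fun n _ => hfac n
    rw [hG0def]
    have := Real.rpow_pos_of_pos hl0 (1 - p)
    positivity
  have hintG0 : 0 < ∫ l in Set.Ioi (0:ℝ), G0 l := by
    have hnn : 0 ≤ᵐ[volume.restrict (Set.Ioi (0:ℝ))] G0 := by
      filter_upwards [ae_restrict_mem measurableSet_Ioi] with l hl
      exact (hG0pos l hl).le
    rw [setIntegral_pos_iff_support_of_nonneg_ae hnn hG0_int]
    have hsub : Set.Ioi (0:ℝ) ⊆ Function.support G0 ∩ Set.Ioi 0 :=
      fun l hl => ⟨(hG0pos l hl).ne', hl⟩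
    calc (0:ENNReal) < volume (Set.Ioi (0:ℝ)) := by simp
      _ ≤ _ := measure_mono hsub
  refine ⟨cp⁻¹ * ∫ l in Set.Ioi (0:ℝ), G0 l, by positivity, ?_⟩
  have : cp * ∑ n ∈ range N, Real.sin (ξ - 2 * π * n / N)
      * (A - B * Real.cos (ξ - 2 * π * n / N)) ^ (-p)
      = Real.sin (N * ξ) * ∫ l in Set.Ioi (0:ℝ), G0 l := by
    rw [← hint_h, hint_hG]
  field_simp at this ⊢
  linarith [this]

lemma main_helper (N : ℕ) (hN : 2 ≤ N) (s c_s A B : ℝ)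
    (hs0 : 0 < s) (hs1 : s < 1) (hc : 0 < c_s) (hB : 0 < B) (hBA : B < A) :
    StrictAntiOn
      (fun ξ : ℝ => ∑ n ∈ Finset.range N, c_s * (A - B * Real.cos (ξ - 2 * π * n / N)) ^ (-(1 - s)))
      (Set.Ioo 0 (π / N)) ∧
    StrictMonoOn
      (fun ξ : ℝ => ∑ n ∈ Finset.range N, c_s * (A - B * Real.cos (ξ - 2 * π * n / N)) ^ (-(1 - s)))
      (Set.Ioo (-(π / N)) 0) := by
  have hN0 : 0 < N := by omega
  have hNR : (0:ℝ) < N := by exact_mod_cast hN0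
  have hxpos : ∀ (t : ℝ) (n : ℕ), 0 < A - B * Real.cos (t - 2 * π * n / N) := by
    intro t n
    nlinarith [Real.cos_le_one (t - 2 * π * n / N), Real.neg_one_le_cos (t - 2 * π * n / N)]
  set f : ℝ → ℝ := fun ξ => ∑ n ∈ Finset.range N,
    c_s * (A - B * Real.cos (ξ - 2 * π * n / N)) ^ (-(1 - s)) with hfdef
  set D : ℝ → ℝ := fun t => c_s * B * (s - 1) * ∑ n ∈ Finset.range N,
    Real.sin (t - 2 * π * n / N) * (A - B * Real.cos (t - 2 * π * n / N)) ^ (-(2 - s)) with hDdef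
  have hder : ∀ t : ℝ, HasDerivAt f (D t) t := by
    intro t
    have hterm : ∀ n ∈ Finset.range N, HasDerivAt
        (fun u : ℝ => c_s * (A - B * Real.cos (u - 2 * π * n / N)) ^ (-(1 - s)))
        (c_s * B * (s - 1) * (Real.sin (t - 2 * π * n / N)
          * (A - B * Real.cos (t - 2 * π * n / N)) ^ (-(2 - s)))) t := by
      intro n _
      have h1 : HasDerivAt (fun u : ℝ => u - 2 * π * n / N) 1 t := (hasDerivAt_id t).sub_const _
      have h2 : HasDerivAt (fun u : ℝ => Real.cos (u - 2 * π * n / N))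
          (-Real.sin (t - 2 * π * n / N)) t := by
        have := (Real.hasDerivAt_cos (t - 2 * π * n / N)).comp t h1
        rw [mul_one] at this
        exact this
      have h3 : HasDerivAt (fun u : ℝ => A - B * Real.cos (u - 2 * π * n / N))
          (B * Real.sin (t - 2 * π * n / N)) t := by
        have := (h2.const_mul B).const_sub A
        refine this.congr_deriv ?_
        ring
      have h4 := (h3.rpow_const (p := -(1 - s)) (Or.inl (hxpos t n).ne')).const_mul c_s
      refine h4.congr_deriv ?_
      have hexp : (A - B * Real.cos (t - 2 * π * n / N)) ^ (-(1 - s) - 1)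
          = (A - B * Real.cos (t - 2 * π * n / N)) ^ (-(2 - s)) := by
        congr 1
        ring
      rw [hexp]
      ring
    have hsum := HasDerivAt.fun_sum hterm
    simp only [hfdef, hDdef]
    rw [Finset.mul_sum]
    exact hsum
  have hcont : Continuous f := by
    have : Differentiable ℝ f := fun t => (hder t).differentiableAt
    exact this.continuous
  have hp1 : 1 < 2 - s := by linarith
  have hp2 : 2 - s < 2 := by linarith
  constructor
  · apply strictAntiOn_of_deriv_neg (convex_Ioo _ _) hcont.continuousOn
    intro t ht
    rw [interior_Ioo] at ht
    have hsin : 0 < Real.sin (N * t) := by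
      apply Real.sin_pos_of_pos_of_lt_pi (mul_pos hNR ht.1)
      calc (N:ℝ) * t < N * (π / N) := by
            apply mul_lt_mul_of_pos_left ht.2 hNR
        _ = π := by field_simp
    obtain ⟨W, hW, hsum⟩ := key_sign N hN0 A B (2 - s) t hB hBA hp1 hp2 hsin.ne'
    have hS : 0 < ∑ n ∈ Finset.range N, Real.sin (t - 2 * π * n / N)
        * (A - B * Real.cos (t - 2 * π * n / N)) ^ (-(2 - s)) := by
      rw [hsum]
      exact mul_pos hsin hW
    rw [(hder t).deriv]
    simp only [hDdef]
    have hneg : c_s * B * (s - 1) < 0 := mul_neg_of_pos_of_neg (mul_pos hc hB) (by linarith)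
    exact mul_neg_of_neg_of_pos hneg hS
  · apply strictMonoOn_of_deriv_pos (convex_Ioo _ _) hcont.continuousOn
    intro t ht
    rw [interior_Ioo] at ht
    have hsin : Real.sin (N * t) < 0 := by
      have h1 : 0 < Real.sin (-(N * t)) := by
        apply Real.sin_pos_of_pos_of_lt_pi
        · nlinarith [ht.2]
        · calc -((N:ℝ) * t) = N * (-t) := by ring
            _ < N * (π / N) := by
              apply mul_lt_mul_of_pos_left _ hNR
              linarith [ht.1]
            _ = π := by field_simp
      rw [Real.sin_neg] at h1
      linarith
    obtain ⟨W, hW, hsum⟩ := key_sign N hN0 A B (2 - s) t hB hBA hp1 hp2 hsin.ne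
    have hS : ∑ n ∈ Finset.range N, Real.sin (t - 2 * π * n / N)
        * (A - B * Real.cos (t - 2 * π * n / N)) ^ (-(2 - s)) < 0 := by
      rw [hsum]
      exact mul_neg_of_neg_of_pos hsin hW
    rw [(hder t).deriv]
    simp only [hDdef]
    have hneg : c_s * B * (s - 1) < 0 := mul_neg_of_pos_of_neg (mul_pos hc hB) (by linarith)
    exact mul_pos_of_neg_of_neg hneg hS

theorem kernel_angular_monotonicity (N : ℕ) (hN : 2 ≤ N) (s c_s r r' : ℝ)
    (hs0 : 0 < s) (hs1 : s < 1) (hc : 0 < c_s)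
    (hr : 1 / 2 < r) (hr2 : r < 2) (hr' : 1 / 2 < r') (hr'2 : r' < 2) (hrr' : r ≠ r') :
    StrictAntiOn
      (fun ξ : ℝ => ∑ n ∈ Finset.range N,
        c_s * (r ^ 2 + r' ^ 2 - 2 * r * r' * Real.cos (ξ - 2 * π * n / N)) ^ (-(1 - s)))
      (Set.Ioo 0 (π / N)) ∧
    StrictMonoOn
      (fun ξ : ℝ => ∑ n ∈ Finset.range N,
        c_s * (r ^ 2 + r' ^ 2 - 2 * r * r' * Real.cos (ξ - 2 * π * n / N)) ^ (-(1 - s)))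
      (Set.Ioo (-(π / N)) 0) := by
  have h0 : r - r' ≠ 0 := sub_ne_zero_of_ne hrr'
  have h1 : 0 < (r - r') ^ 2 := by positivity
  have hB : 0 < 2 * r * r' := by nlinarith
  have hBA : 2 * r * r' < r ^ 2 + r' ^ 2 := by nlinarith
  exact main_helper N hN s c_s (r ^ 2 + r' ^ 2) (2 * r * r') hs0 hs1 hc hB hBA
end
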